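/- With the notation of the AQ-construction, the Walsh spectrum of the modified restriction f*_{αᵢ}(y) = f*(αᵢ, y) satisfies f̂*_{αᵢ}(βⱼ) = (−1)^{γ_{ij}} · 2^{n−1} for j = 1,2,3,4 and vanishes at all other points, while f*_α = f_α for α ∉ {α₁,α₂,α₃,α₄}. -/

import Mathlib

open Finset

def ip {n : ℕ} (a b : Fin n → ZMod 2) : ZMod 2 := ∑ i, a i * b i

def wht {n : ℕ} (f : (Fin n → ZMod 2) → ZMod 2) (l : Fin n → ZMod 2) : ℤ :=
  ∑ x : Fin n → ZMod 2, (-1 : ℤ) ^ (f x + ip l x).val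


def whtP {m k : ℕ} (f : (Fin m → ZMod 2) × (Fin k → ZMod 2) → ZMod 2)
    (l : (Fin m → ZMod 2) × (Fin k → ZMod 2)) : ℤ :=
  ∑ x : (Fin m → ZMod 2) × (Fin k → ZMod 2),
    (-1 : ℤ) ^ (f x + ip l.1 x.1 + ip l.2 x.2).val


def fstar {n : ℕ} (φ : (Fin n → ZMod 2) → (Fin n → ZMod 2))
    (ψ : (Fin n → ZMod 2) → ZMod 2) (α : Fin 4 → (Fin n → ZMod 2))
    (γ : Fin 4 → Fin 4 → ZMod 2)
    (p : (Fin n → ZMod 2) × (Fin n → ZMod 2)) : ZMod 2 :=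
  ip (φ p.1) p.2 + ψ p.1 +
    ∑ i : Fin 4, (if p.1 = α i then
      (ip (φ (α i)) p.2 + ψ (α i) +
        ((ip (φ (α 0)) p.2 + γ i 0) * (ip (φ (α 1)) p.2 + γ i 1) +
         (ip (φ (α 0)) p.2 + γ i 0) * (ip (φ (α 2)) p.2 + γ i 2) +
         (ip (φ (α 1)) p.2 + γ i 1) * (ip (φ (α 2)) p.2 + γ i 2)))
      else 0)

lemma neg_one_pow_one_add (c : ZMod 2) :
    ((-1 : ℤ)) ^ ((1 : ZMod 2) + c).val = -(-1) ^ c.val := by revert c; decide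

lemma maj_key (a b c m : ZMod 2) :
    (2 : ℤ) * (-1) ^ ((a * b + a * c + b * c) + m).val
      = (-1) ^ (a + m).val + (-1) ^ (b + m).val + (-1) ^ (c + m).val
        - (-1) ^ ((a + b + c) + m).val := by revert a b c m; decide

lemma ip_add_left {n : ℕ} (a b y : Fin n → ZMod 2) :
    ip (a + b) y = ip a y + ip b y := by
  simp [ip, add_mul, Finset.sum_add_distrib]

lemma char_sum {n : ℕ} (b : Fin n → ZMod 2) :
    ∑ y : Fin n → ZMod 2, (-1 : ℤ) ^ (ip b y).val = if b = 0 then 2 ^ n else 0 := by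
  split_ifs with h
  · subst h
    have h0 : ∀ y : Fin n → ZMod 2, ip (0 : Fin n → ZMod 2) y = 0 := by
      intro y; simp [ip]
    simp only [h0]
    simp [Finset.card_univ]
  · obtain ⟨i0, hi0⟩ : ∃ i, b i ≠ 0 := by
      by_contra h'
      push_neg at h'
      exact h (funext h')
    have hb1 : b i0 = 1 := by
      revert hi0; revert i0; intro i0
      generalize b i0 = c; revert c; decide
    have key : ∀ y : Fin n → ZMod 2,
        ip b (Function.update y i0 (y i0 + 1)) = ip b y + 1 := by
      intro y
      have hterm : ∀ i, b i * (Function.update y i0 (y i0 + 1) i)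
          = b i * y i + (if i = i0 then 1 else 0) := by
        intro i
        by_cases hi : i = i0
        · subst hi
          simp [Function.update_self, mul_add, hb1]
        · simp [Function.update_of_ne hi, hi]
      simp only [ip, hterm, Finset.sum_add_distrib]
      rw [Finset.sum_ite_eq' Finset.univ i0 (fun _ => (1 : ZMod 2))]
      simp
    apply Finset.sum_ninvolution (fun y => Function.update y i0 (y i0 + 1))
    · intro y
      rw [key y]
      have : ∀ c : ZMod 2, (-1 : ℤ) ^ c.val + (-1) ^ (c + 1).val = 0 := by decide
      exact this _
    · intro y _ hcontra
      have h1 := congrFun hcontra i0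
      simp only [Function.update_self] at h1
      have : ∀ c : ZMod 2, c + 1 ≠ c := by decide
      exact this _ h1
    · intro y; exact Finset.mem_univ _
    · intro y
      simp only [Function.update_self, Function.update_idem]
      have : y i0 + 1 + 1 = y i0 := by
        have h2 : ∀ c : ZMod 2, c + 1 + 1 = c := by decide
        exact h2 _
      rw [this, Function.update_eq_self]

lemma char_sum_aff {n : ℕ} (b μ : Fin n → ZMod 2) (c : ZMod 2) :
    ∑ y : Fin n → ZMod 2, (-1 : ℤ) ^ (ip b y + c + ip μ y).val
      = (-1) ^ c.val * (if μ = b then 2 ^ n else 0) := by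
  have h1 : ∀ y, ip b y + c + ip μ y = ip (b + μ) y + c := by
    intro y; rw [ip_add_left]; ring
  have h2 : ∀ (d e : ZMod 2), (-1 : ℤ) ^ (d + e).val = (-1) ^ d.val * (-1) ^ e.val := by
    decide
  simp only [h1, h2]
  rw [← Finset.sum_mul, char_sum]
  have h3 : (b + μ = 0) ↔ (μ = b) := by
    simp only [funext_iff, Pi.add_apply, Pi.zero_apply]
    have : ∀ u v : ZMod 2, u + v = 0 ↔ v = u := by decide
    constructor
    · intro hh k; exact (this _ _).1 (hh k)
    · intro hh k; exact (this _ _).2 (hh k)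
  simp only [h3]
  ring

lemma fstar_at {n : ℕ} (φ : (Fin n → ZMod 2) → (Fin n → ZMod 2))
    (ψ : (Fin n → ZMod 2) → ZMod 2) (α : Fin 4 → (Fin n → ZMod 2))
    (hα : Function.Injective α) (γ : Fin 4 → Fin 4 → ZMod 2) (i : Fin 4) :
    (fun y => fstar φ ψ α γ (α i, y)) = fun y =>
      (ip (φ (α 0)) y + γ i 0) * (ip (φ (α 1)) y + γ i 1) +
      (ip (φ (α 0)) y + γ i 0) * (ip (φ (α 2)) y + γ i 2) +
      (ip (φ (α 1)) y + γ i 1) * (ip (φ (α 2)) y + γ i 2) := by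
  funext y
  unfold fstar
  simp only
  rw [Finset.sum_eq_single i]
  · rw [if_pos rfl]
    have cancel : ∀ u v : ZMod 2, u + (u + v) = v := by decide
    exact cancel _ _
  · intro k _ hk
    rw [if_neg (fun h => hk ((hα h).symm))]
  · intro h; exact absurd (Finset.mem_univ i) h

lemma two_wht {n : ℕ} (φ : (Fin n → ZMod 2) → (Fin n → ZMod 2))
    (α : Fin 4 → (Fin n → ZMod 2)) (γ : Fin 4 → Fin 4 → ZMod 2)
    (hβsum : ∑ i, φ (α i) = 0) (hrow : ∀ i, ∑ j, γ i j = 1)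
    (i : Fin 4) (μ : Fin n → ZMod 2) :
    2 * wht (fun y =>
      (ip (φ (α 0)) y + γ i 0) * (ip (φ (α 1)) y + γ i 1) +
      (ip (φ (α 0)) y + γ i 0) * (ip (φ (α 2)) y + γ i 2) +
      (ip (φ (α 1)) y + γ i 1) * (ip (φ (α 2)) y + γ i 2)) μ
      = ∑ j : Fin 4, (-1 : ℤ) ^ (γ i j).val * (if μ = φ (α j) then 2 ^ n else 0) := by
  have hb : φ (α 0) + φ (α 1) + φ (α 2) = φ (α 3) := by
    rw [Fin.sum_univ_four] at hβsum
    funext k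
    have hk := congrFun hβsum k
    simp only [Pi.add_apply, Pi.zero_apply] at hk ⊢
    revert hk
    generalize φ (α 0) k = u; generalize φ (α 1) k = v
    generalize φ (α 2) k = w; generalize φ (α 3) k = z
    revert u v w z; exact (by decide : ∀ (u v w z : ZMod 2), u + v + w + z = 0 → u + v + w = z)
  have hγ : γ i 0 + γ i 1 + γ i 2 = 1 + γ i 3 := by
    have hr := hrow i
    rw [Fin.sum_univ_four] at hr
    revert hr
    generalize γ i 0 = u; generalize γ i 1 = v
    generalize γ i 2 = w; generalize γ i 3 = z
    revert u v w z; decide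
  unfold wht
  rw [Finset.mul_sum]
  have step : ∀ y : Fin n → ZMod 2,
      (2 : ℤ) * (-1) ^ ((((ip (φ (α 0)) y + γ i 0) * (ip (φ (α 1)) y + γ i 1) +
        (ip (φ (α 0)) y + γ i 0) * (ip (φ (α 2)) y + γ i 2) +
        (ip (φ (α 1)) y + γ i 1) * (ip (φ (α 2)) y + γ i 2))) + ip μ y).val
      = (-1) ^ (ip (φ (α 0)) y + γ i 0 + ip μ y).val
        + (-1) ^ (ip (φ (α 1)) y + γ i 1 + ip μ y).val
        + (-1) ^ (ip (φ (α 2)) y + γ i 2 + ip μ y).val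
        - (-1) ^ (ip (φ (α 3)) y + (1 + γ i 3) + ip μ y).val := by
    intro y
    have h4 : (ip (φ (α 0)) y + γ i 0) + (ip (φ (α 1)) y + γ i 1) +
        (ip (φ (α 2)) y + γ i 2) + ip μ y
        = ip (φ (α 3)) y + (1 + γ i 3) + ip μ y := by
      have e1 : ip (φ (α 0)) y + ip (φ (α 1)) y + ip (φ (α 2)) y = ip (φ (α 3)) y := by
        rw [← ip_add_left, ← ip_add_left, hb]
      calc (ip (φ (α 0)) y + γ i 0) + (ip (φ (α 1)) y + γ i 1) +
            (ip (φ (α 2)) y + γ i 2) + ip μ y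
          = (ip (φ (α 0)) y + ip (φ (α 1)) y + ip (φ (α 2)) y) +
            (γ i 0 + γ i 1 + γ i 2) + ip μ y := by ring
        _ = ip (φ (α 3)) y + (1 + γ i 3) + ip μ y := by rw [e1, hγ]
    rw [← h4]
    exact maj_key (ip (φ (α 0)) y + γ i 0) (ip (φ (α 1)) y + γ i 1)
      (ip (φ (α 2)) y + γ i 2) (ip μ y)
  simp only [step]
  rw [Finset.sum_sub_distrib, Finset.sum_add_distrib, Finset.sum_add_distrib,
    char_sum_aff, char_sum_aff, char_sum_aff, char_sum_aff]
  rw [Fin.sum_univ_four, neg_one_pow_one_add]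
  ring

theorem aq4_restriction_spectrum (n : ℕ) (hn : 2 ≤ n)
    (φ : (Fin n → ZMod 2) → (Fin n → ZMod 2)) (hφ : Function.Bijective φ)
    (ψ : (Fin n → ZMod 2) → ZMod 2)
    (α : Fin 4 → (Fin n → ZMod 2)) (hα : Function.Injective α)
    (hαsum : ∑ i, α i = 0) (hβsum : ∑ i, φ (α i) = 0)
    (γ : Fin 4 → Fin 4 → ZMod 2)
    (hrow : ∀ i, ∑ j, γ i j = 1) (hcol : ∀ j, ∑ i, γ i j = 1) :
    (∀ i j : Fin 4,
      wht (fun y => fstar φ ψ α γ (α i, y)) (φ (α j))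
        = (-1 : ℤ) ^ (γ i j).val * 2 ^ (n - 1)) ∧
    (∀ i : Fin 4, ∀ μ : Fin n → ZMod 2, (∀ j : Fin 4, μ ≠ φ (α j)) →
      wht (fun y => fstar φ ψ α γ (α i, y)) μ = 0) ∧
    (∀ a : Fin n → ZMod 2, (∀ i : Fin 4, a ≠ α i) →
      (fun y => fstar φ ψ α γ (a, y)) = fun y => ip (φ a) y + ψ a) := by
  have hβinj : Function.Injective (fun j => φ (α j)) := fun j k h => hα (hφ.1 h)
  have key : ∀ (i : Fin 4) (μ : Fin n → ZMod 2),
      2 * wht (fun y => fstar φ ψ α γ (α i, y)) μ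
        = ∑ j : Fin 4, (-1 : ℤ) ^ (γ i j).val * (if μ = φ (α j) then 2 ^ n else 0) := by
    intro i μ
    rw [fstar_at φ ψ α hα γ i]
    exact two_wht φ α γ hβsum hrow i μ
  have h2n : (2 : ℤ) ^ n = 2 * 2 ^ (n - 1) := by
    rw [← pow_succ']
    congr 1
    omega
  refine ⟨?_, ?_, ?_⟩
  · intro i j
    have hk := key i (φ (α j))
    rw [Finset.sum_eq_single j] at hk
    · rw [if_pos rfl, h2n] at hk
      have : 2 * wht (fun y => fstar φ ψ α γ (α i, y)) (φ (α j))
          = 2 * ((-1 : ℤ) ^ (γ i j).val * 2 ^ (n - 1)) := by rw [hk]; ring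
      exact mul_left_cancel₀ two_ne_zero this
    · intro k _ hk'
      rw [if_neg (fun h => hk' (hβinj h.symm)), mul_zero]
    · intro h; exact absurd (Finset.mem_univ j) h
  · intro i μ hμ
    have hk := key i μ
    rw [Finset.sum_eq_zero (fun j _ => by rw [if_neg (hμ j), mul_zero])] at hk
    omega
  · intro a ha
    funext y
    unfold fstar
    simp only
    rw [Finset.sum_eq_zero (fun k _ => by rw [if_neg (ha k)]), add_zero]
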